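/- Let d ≥ 2 and let p : Fin d → ℝ be a probability vector (p_i ≥ 0 and ∑_i p_i = 1). Set χ = ∑_i |p_i − 1/d| and assume χ ≤ 1/d. Then every p_i is strictly positive and for every index i: |log₂(p_i · d)| ≤ −log₂(1 − d·χ/2) ≤ d·χ. -/

import Mathlib

open scoped Kronecker ComplexOrder
open Matrix MeasureTheory

noncomputable section

/-- The trace norm `‖A‖₁ = Tr √(AᴴA)`. -/
def traceNorm {n : Type*} [Fintype n] [DecidableEq n] (A : Matrix n n ℂ) : ℝ :=
  (((Matrix.posSemidef_conjTranspose_mul_self A).1.eigenvectorUnitary.1 : Matrix n n ℂ) *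
      Matrix.diagonal (((↑) : ℝ → ℂ) ∘ (√·) ∘ (Matrix.posSemidef_conjTranspose_mul_self A).1.eigenvalues) *
      (star (Matrix.posSemidef_conjTranspose_mul_self A).1.eigenvectorUnitary : Matrix n n ℂ)).trace.re

/-- The operator (spectral) norm `‖A‖_∞`. -/
def opNorm {n : Type*} [Fintype n] [DecidableEq n] (A : Matrix n n ℂ) : ℝ :=
  ‖Matrix.toEuclideanCLM (𝕜 := ℂ) A‖

/-- The partial trace over the second tensor factor. -/
def ptrace2 {m e : Type*} [Fintype e] (ρ : Matrix (m × e) (m × e) ℂ) : Matrix m m ℂ :=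
  Matrix.of fun i j => ∑ k, ρ (i, k) (j, k)

/-- The binary logarithm `log₂` of a Hermitian matrix, via the spectral functional
calculus (junk value `0` on non-Hermitian input). -/
def matLog2 {n : Type*} [Fintype n] [DecidableEq n] (A : Matrix n n ℂ) : Matrix n n ℂ :=
  if hA : A.IsHermitian then hA.cfc (Real.logb 2) else 0

/-- The commutator `[A, B] = A·B − B·A`. -/
def mcomm {n : Type*} [Fintype n] (A B : Matrix n n ℂ) : Matrix n n ℂ :=
  A * B - B * A

/-- If a probability vector `p` on `d ≥ 2` outcomes has ℓ¹-distance
`χ ≤ 1/d` from the uniform distribution, then every `p i` is strictly positive and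
`|log₂(p i · d)| ≤ −log₂(1 − d·χ/2) ≤ d·χ` for every `i`. -/
theorem probVector_close_to_uniform {d : ℕ} (hd : 2 ≤ d)
    (p : Fin d → ℝ) (hp : ∀ i, 0 ≤ p i) (hsum : ∑ i, p i = 1)
    (χ : ℝ) (hχ : χ = ∑ i, |p i - 1 / (d : ℝ)|) (hsmall : χ ≤ 1 / (d : ℝ)) :
    (∀ i, 0 < p i) ∧
      ∀ i, |Real.logb 2 (p i * d)| ≤ -Real.logb 2 (1 - (d : ℝ) * χ / 2) ∧
        -Real.logb 2 (1 - (d : ℝ) * χ / 2) ≤ (d : ℝ) * χ := by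
  have hd0 : (0:ℝ) < (d:ℝ) := by
    have : (2:ℝ) ≤ (d:ℝ) := by exact_mod_cast hd
    linarith
  have hχ0 : 0 ≤ χ := by
    rw [hχ]; exact Finset.sum_nonneg fun i _ => abs_nonneg _
  set t : ℝ := (d:ℝ) * χ / 2 with ht
  have ht0 : 0 ≤ t := by positivity
  have ht2 : t ≤ 1/2 := by
    have h := mul_le_mul_of_nonneg_left hsmall hd0.le
    rw [mul_one_div, div_self hd0.ne'] at h
    rw [ht]; linarith
  have hzero : ∑ j, (p j - 1/(d:ℝ)) = 0 := by
    rw [Finset.sum_sub_distrib, hsum, Finset.sum_const, Finset.card_univ,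
      Fintype.card_fin, nsmul_eq_mul, mul_one_div, div_self hd0.ne']
    ring
  have hkey : ∀ i, |p i - 1/(d:ℝ)| ≤ χ/2 := by
    intro i
    have hadd := Finset.add_sum_erase Finset.univ (fun j => p j - 1/(d:ℝ))
      (Finset.mem_univ i)
    have h1 : p i - 1/(d:ℝ) = -(∑ j ∈ Finset.univ.erase i, (p j - 1/(d:ℝ))) := by
      rw [hzero] at hadd; linarith
    have h2 : |p i - 1/(d:ℝ)| ≤ ∑ j ∈ Finset.univ.erase i, |p j - 1/(d:ℝ)| := by
      rw [h1, abs_neg]; exact Finset.abs_sum_le_sum_abs _ _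
    have hadd2 := Finset.add_sum_erase Finset.univ (fun j => |p j - 1/(d:ℝ)|)
      (Finset.mem_univ i)
    rw [← hχ] at hadd2
    linarith
  have hpos : ∀ i, 0 < p i := by
    intro i
    have h := (abs_le.mp (hkey i)).1
    have hs : χ/2 ≤ 1/(2*(d:ℝ)) := by
      rw [div_le_div_iff₀ (by norm_num) (by positivity)]
      have := mul_le_mul_of_nonneg_left hsmall (by norm_num : (0:ℝ) ≤ 2)
      calc χ * (2*(d:ℝ)) = (2 * χ) * d := by ring
        _ ≤ (2 * (1/(d:ℝ))) * d := by
            apply mul_le_mul_of_nonneg_right _ hd0.le; linarith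
        _ = 2 := by field_simp
        _ ≤ 1 * 2 := by norm_num
    have h1d : 0 < 1/(2*(d:ℝ)) := by positivity
    have : 1/(d:ℝ) = 1/(2*(d:ℝ)) + 1/(2*(d:ℝ)) := by field_simp; ring
    linarith
  refine ⟨hpos, fun i => ?_⟩
  have hlow : 1 - t ≤ p i * d := by
    have h := (abs_le.mp (hkey i)).1
    have : (1/(d:ℝ) - χ/2) * d ≤ p i * d := by
      apply mul_le_mul_of_nonneg_right _ hd0.le; linarith
    calc 1 - t = (1/(d:ℝ) - χ/2) * d := by field_simp; ring
      _ ≤ p i * d := this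
  have hhigh : p i * d ≤ 1 + t := by
    have h := (abs_le.mp (hkey i)).2
    have : p i * d ≤ (1/(d:ℝ) + χ/2) * d := by
      apply mul_le_mul_of_nonneg_right _ hd0.le; linarith
    calc p i * d ≤ (1/(d:ℝ) + χ/2) * d := this
      _ = 1 + t := by field_simp; ring
  have h1t : 0 < 1 - t := by linarith
  have hb : (1:ℝ) < 2 := one_lt_two
  constructor
  · rw [abs_le]
    constructor
    · have := Real.logb_le_logb_of_le hb h1t hlow
      linarith
    · have h1 : Real.logb 2 (p i * d) ≤ Real.logb 2 (1 + t) :=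
        Real.logb_le_logb_of_le hb (by nlinarith [hpos i]) hhigh
      have h2 : Real.logb 2 (1 + t) + Real.logb 2 (1 - t) ≤ 0 := by
        rw [← Real.logb_mul (by linarith) h1t.ne']
        exact Real.logb_nonpos hb (mul_nonneg (by linarith) h1t.le) (by nlinarith)
      linarith
  · -- -logb 2 (1-t) ≤ 2t = d*χ
    have hcc := strictConcaveOn_log_Ioi.concaveOn.2 (x := 1) (y := 1/2)
      (by norm_num : (1:ℝ) ∈ Set.Ioi 0) (by norm_num : (1/2:ℝ) ∈ Set.Ioi 0)
      (by linarith : (0:ℝ) ≤ 1 - 2*t) (by linarith : (0:ℝ) ≤ 2*t) (by ring)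
    simp only [smul_eq_mul, Real.log_one, mul_zero, zero_add, mul_one] at hcc
    have hhalf : Real.log (1/2) = -Real.log 2 := by
      rw [one_div, Real.log_inv]
    rw [hhalf] at hcc
    have hcomb : 1 - 2*t + 2*t * (1/2) = 1 - t := by ring
    rw [hcomb] at hcc
    -- hcc : 2*t * (-log 2) ≤ log (1-t)
    have hlog2 : 0 < Real.log 2 := Real.log_pos hb
    have hfin : -Real.logb 2 (1 - t) ≤ 2*t := by
      rw [Real.logb, ← neg_div, div_le_iff₀ hlog2]
      nlinarith
    have h2t : (d:ℝ) * χ = 2 * t := by rw [ht]; ring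
    linarith
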